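/- Let p be prime and I = {n+1, n+2, ..., n+N} ⊆ 𝔽_p an interval with N < (p-1)/32. If I \ {0} = A·B for sets A, B ⊆ 𝔽_p with |A| ≥ 2 and |B| ≥ 2, then N - 1 ≤ |A|·|B| ≤ 32N. (This uses Bourgain's sum-product estimate: |8XY - 8XY| ≥ (1/2)·min(|X||Y|, p-1) for X, Y ⊆ 𝔽_p with X ≠ {0}, Y ≠ {0}.) -/
import Mathlib


open Finset Pointwise

/-- The m-fold iterated sumset of a finite set (with `iterSumset 0 X = {0}`). -/
def iterSumset {α : Type*} [AddCommMonoid α] [DecidableEq α] :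
    ℕ → Finset α → Finset α
  | 0, _ => {0}
  | n + 1, X => iterSumset n X + X

/-- Shparlinski's observation: assuming Bourgain's sum-product estimate, a
nontrivial multiplicative decomposition I \ {0} = A·B of an interval of
length N < (p-1)/32 forces N - 1 ≤ |A||B| ≤ 32N. -/
theorem decomposition_cardinality_bound
    (p : ℕ) [Fact p.Prime] (n : ℤ) (N : ℕ) (hN : 32 * N < p - 1)
    (bourgain : ∀ X Y : Finset (ZMod p), X.Nonempty → Y.Nonempty →
      X ≠ ({0} : Finset (ZMod p)) → Y ≠ ({0} : Finset (ZMod p)) →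
      min (X.card * Y.card) (p - 1) ≤
        2 * (iterSumset 8 (X * Y) - iterSumset 8 (X * Y)).card)
    (I : Finset (ZMod p))
    (hI : I = (Finset.Icc 1 N).image (fun i : ℕ => (n : ZMod p) + (i : ZMod p)))
    (A B : Finset (ZMod p)) (hA : 2 ≤ A.card) (hB : 2 ≤ B.card)
    (hAB : I.erase 0 = A * B) :
    N - 1 ≤ A.card * B.card ∧ A.card * B.card ≤ 32 * N := by
  have hp2 : 2 ≤ p := (Fact.out : p.Prime).two_le
  have hAne : A.Nonempty := Finset.card_pos.mp (by omega)
  have hBne : B.Nonempty := Finset.card_pos.mp (by omega)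
  have hA0 : A ≠ ({0} : Finset (ZMod p)) := by
    intro h; rw [h, Finset.card_singleton] at hA; omega
  have hB0 : B ≠ ({0} : Finset (ZMod p)) := by
    intro h; rw [h, Finset.card_singleton] at hB; omega
  have hABne : (A * B).Nonempty := hAne.mul hBne
  -- N ≥ 1
  have hN1 : 1 ≤ N := by
    by_contra h
    have hN0 : N = 0 := by omega
    have : I = ∅ := by simp [hI, hN0]
    rw [this] at hAB
    simp at hAB
    exact hABne.ne_empty hAB.symm
  have hNp : N < p := by omega
  -- membership description of A*B
  have hmem : ∀ x ∈ A * B, ∃ i : ℕ, 1 ≤ i ∧ i ≤ N ∧ x = (n : ZMod p) + (i : ZMod p) := by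
    intro x hx
    rw [← hAB] at hx
    have hx' := Finset.mem_of_mem_erase hx
    rw [hI] at hx'
    obtain ⟨i, hi, hxi⟩ := Finset.mem_image.mp hx'
    rw [Finset.mem_Icc] at hi
    exact ⟨i, hi.1, hi.2, hxi.symm⟩
  -- structure of iterated sumsets
  have key : ∀ m : ℕ, ∀ x ∈ iterSumset m (A * B),
      ∃ j : ℤ, (m : ℤ) ≤ j ∧ j ≤ (m : ℤ) * N ∧ x = (((m : ℤ) * n + j : ℤ) : ZMod p) := by
    intro m
    induction m with
    | zero =>
      intro x hx
      simp only [iterSumset, Finset.mem_singleton] at hx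
      exact ⟨0, le_refl 0, by simp, by simp [hx]⟩
    | succ m ih =>
      intro x hx
      rw [iterSumset] at hx
      obtain ⟨y, hy, s, hs, rfl⟩ := Finset.mem_add.mp hx
      obtain ⟨j, hj1, hj2, rfl⟩ := ih y hy
      obtain ⟨i, hi1, hi2, rfl⟩ := hmem s hs
      refine ⟨j + i, ?_, ?_, ?_⟩
      · push_cast; omega
      · have h1 : (i : ℤ) ≤ (N : ℤ) := by exact_mod_cast hi2
        have h2 : ((m : ℤ) + 1) * N = (m : ℤ) * N + N := by ring
        push_cast
        linarith
      · push_cast; ring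
  -- difference set is inside an interval
  have hsub : iterSumset 8 (A * B) - iterSumset 8 (A * B) ⊆
      (Finset.Icc (8 - 8 * (N : ℤ)) (8 * (N : ℤ) - 8)).image (fun j : ℤ => (j : ZMod p)) := by
    intro x hx
    obtain ⟨y, hy, z, hz, rfl⟩ := Finset.mem_sub.mp hx
    obtain ⟨j1, hj11, hj12, rfl⟩ := key 8 y hy
    obtain ⟨j2, hj21, hj22, rfl⟩ := key 8 z hz
    refine Finset.mem_image.mpr ⟨j1 - j2, Finset.mem_Icc.mpr ⟨?_, ?_⟩, ?_⟩
    · push_cast at hj11 hj12 hj21 hj22 ⊢; omega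
    · push_cast at hj11 hj12 hj21 hj22 ⊢; omega
    · push_cast; ring
  have hD : (iterSumset 8 (A * B) - iterSumset 8 (A * B)).card ≤ 16 * N := by
    calc (iterSumset 8 (A * B) - iterSumset 8 (A * B)).card
        ≤ ((Finset.Icc (8 - 8 * (N : ℤ)) (8 * (N : ℤ) - 8)).image
            (fun j : ℤ => (j : ZMod p))).card := Finset.card_le_card hsub
      _ ≤ (Finset.Icc (8 - 8 * (N : ℤ)) (8 * (N : ℤ) - 8)).card := Finset.card_image_le
      _ ≤ 16 * N := by rw [Int.card_Icc]; omega
  have hb := bourgain A B hAne hBne hA0 hB0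
  have hupper : A.card * B.card ≤ 32 * N := by omega
  refine ⟨?_, hupper⟩
  -- lower bound
  have hIcard : I.card = N := by
    rw [hI]
    rw [Finset.card_image_of_injOn, Nat.card_Icc]
    · omega
    · intro a ha b hb hab
      simp only [Finset.coe_Icc, Set.mem_Icc] at ha hb
      have : (a : ZMod p) = (b : ZMod p) := by
        have := add_left_cancel hab
        exact this
      have := (ZMod.natCast_eq_natCast_iff' a b p).mp this
      rw [Nat.mod_eq_of_lt (by omega), Nat.mod_eq_of_lt (by omega)] at this
      exact this
  calc N - 1 = I.card - 1 := by rw [hIcard]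
    _ ≤ (I.erase 0).card := Finset.pred_card_le_card_erase
    _ = (A * B).card := by rw [hAB]
    _ ≤ A.card * B.card := Finset.card_mul_le
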